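/- For every n ≥ 2 there exists a matroid on the ground set of all unordered pairs of distinct elements of Fin n (the edges of the complete graph K_n) whose independent sets are exactly the (2,3)-sparse edge sets. -/

import Mathlib

open Finset

/-- The vertex span `V(E)`: vertices incident to at least one edge of `E`. -/
def vertexSpan {V : Type*} [Fintype V] [DecidableEq V] (E : Finset (Sym2 V)) : Finset V :=
  Finset.univ.filter fun v => ∃ e ∈ E, v ∈ e

/-- `(2,3)`-sparsity: every nonempty subset `E' ⊆ E` has `|E'| ≤ 2|V(E')| - 3`. -/
def Sparse23 {V : Type*} [Fintype V] [DecidableEq V] (E : Finset (Sym2 V)) : Prop :=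
  ∀ E' ⊆ E, E'.Nonempty → (E'.card : ℤ) ≤ 2 * (vertexSpan E').card - 3

namespace SparseAux

variable {V : Type*} [Fintype V] [DecidableEq V]

lemma mem_vertexSpan {E : Finset (Sym2 V)} {v : V} :
    v ∈ vertexSpan E ↔ ∃ e ∈ E, v ∈ e := by
  simp [vertexSpan]

lemma vertexSpan_mono {E1 E2 : Finset (Sym2 V)} (h : E1 ⊆ E2) :
    vertexSpan E1 ⊆ vertexSpan E2 := by
  intro v hv
  rw [mem_vertexSpan] at hv ⊢
  obtain ⟨e, he, hve⟩ := hv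
  exact ⟨e, h he, hve⟩

lemma vertexSpan_union (E1 E2 : Finset (Sym2 V)) :
    vertexSpan (E1 ∪ E2) = vertexSpan E1 ∪ vertexSpan E2 := by
  ext v
  simp only [mem_vertexSpan, Finset.mem_union]
  constructor
  · rintro ⟨e, he | he, hv⟩
    · exact Or.inl ⟨e, he, hv⟩
    · exact Or.inr ⟨e, he, hv⟩
  · rintro (⟨e, he, hv⟩ | ⟨e, he, hv⟩)
    · exact ⟨e, Or.inl he, hv⟩
    · exact ⟨e, Or.inr he, hv⟩

lemma vertexSpan_inter_subset (E1 E2 : Finset (Sym2 V)) :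
    vertexSpan (E1 ∩ E2) ⊆ vertexSpan E1 ∩ vertexSpan E2 := by
  intro v hv
  rw [Finset.mem_inter]
  exact ⟨vertexSpan_mono Finset.inter_subset_left hv,
    vertexSpan_mono Finset.inter_subset_right hv⟩

lemma vertexSpan_empty : vertexSpan (∅ : Finset (Sym2 V)) = ∅ := by
  ext v; simp [mem_vertexSpan]

lemma vertexSpan_singleton {a b : V} (hab : a ≠ b) :
    vertexSpan ({s(a, b)} : Finset (Sym2 V)) = {a, b} := by
  ext v
  simp [mem_vertexSpan, Sym2.mem_iff]

lemma card_vertexSpan_singleton {e : Sym2 V} (he : ¬ e.IsDiag) :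
    (vertexSpan ({e} : Finset (Sym2 V))).card = 2 := by
  induction e using Sym2.ind with
  | _ a b =>
    rw [Sym2.isDiag_iff_proj_eq] at he
    rw [vertexSpan_singleton he, Finset.card_pair he]

lemma sparse_nodiag {E : Finset (Sym2 V)} (hE : Sparse23 E) {e : Sym2 V} (he : e ∈ E) :
    ¬ e.IsDiag := by
  intro hd
  have h1 := hE {e} (by simpa using he) ⟨e, by simp⟩
  induction e using Sym2.ind with
  | _ a b =>
    have hd' : a = b := hd
    subst hd'
    have : vertexSpan ({s(a, a)} : Finset (Sym2 V)) ⊆ {a} := by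
      intro v hv
      rw [mem_vertexSpan] at hv
      obtain ⟨f, hf, hvf⟩ := hv
      simp only [Finset.mem_singleton] at hf
      subst hf
      simp only [Sym2.mem_iff] at hvf
      simp [hvf.elim id id]
    have hc : (vertexSpan ({s(a, a)} : Finset (Sym2 V))).card ≤ 1 :=
      le_trans (Finset.card_le_card this) (by simp)
    simp only [Finset.card_singleton] at h1
    omega

/-- `T` is a tight subset of `I`. -/
def Tight (I T : Finset (Sym2 V)) : Prop :=
  T ⊆ I ∧ (T.card : ℤ) = 2 * (vertexSpan T).card - 3

instance (I : Finset (Sym2 V)) : DecidablePred (Tight I) := fun _ => by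
  unfold Tight; infer_instance

lemma Tight.nonempty {I T : Finset (Sym2 V)} (h : Tight I T) : T.Nonempty := by
  rcases T.eq_empty_or_nonempty with rfl | hne
  · exfalso
    have := h.2
    rw [vertexSpan_empty] at this
    simp at this
  · exact hne

lemma tight_singleton {I : Finset (Sym2 V)} {e : Sym2 V} (heI : e ∈ I) (he : ¬ e.IsDiag) :
    Tight I {e} := by
  refine ⟨by simpa using heI, ?_⟩
  rw [card_vertexSpan_singleton he]
  simp

lemma tight_union {I T1 T2 : Finset (Sym2 V)} (hI : Sparse23 I)
    (h1 : Tight I T1) (h2 : Tight I T2)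
    (hV : 2 ≤ (vertexSpan T1 ∩ vertexSpan T2).card) : Tight I (T1 ∪ T2) := by
  have hsub : T1 ∪ T2 ⊆ I := Finset.union_subset h1.1 h2.1
  have hinter : ((T1 ∩ T2).card : ℤ) ≤ 2 * ((vertexSpan T1 ∩ vertexSpan T2).card : ℤ) - 3 := by
    rcases (T1 ∩ T2).eq_empty_or_nonempty with h | h
    · rw [h]
      simp only [Finset.card_empty, Nat.cast_zero]
      omega
    · have := hI (T1 ∩ T2) (le_trans Finset.inter_subset_left h1.1) h
      have hle : (vertexSpan (T1 ∩ T2)).card ≤ (vertexSpan T1 ∩ vertexSpan T2).card :=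
        Finset.card_le_card (vertexSpan_inter_subset T1 T2)
      push_cast at this ⊢
      omega
  have hupper : ((T1 ∪ T2).card : ℤ) ≤ 2 * ((vertexSpan (T1 ∪ T2)).card : ℤ) - 3 :=
    hI (T1 ∪ T2) hsub (h1.nonempty.mono Finset.subset_union_left)
  have hcardE : (T1 ∪ T2).card + (T1 ∩ T2).card = T1.card + T2.card :=
    Finset.card_union_add_card_inter T1 T2
  have hcardV : (vertexSpan T1 ∪ vertexSpan T2).card + (vertexSpan T1 ∩ vertexSpan T2).card
      = (vertexSpan T1).card + (vertexSpan T2).card :=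
    Finset.card_union_add_card_inter _ _
  have hspan : vertexSpan (T1 ∪ T2) = vertexSpan T1 ∪ vertexSpan T2 := vertexSpan_union T1 T2
  refine ⟨hsub, ?_⟩
  rw [hspan] at hupper ⊢
  have e1 := h1.2
  have e2 := h2.2
  push_cast [← hcardE, ← hcardV] at e1 e2 hupper ⊢
  omega

/-- `T` spans the endpoints of `e`. -/
def Spans (T : Finset (Sym2 V)) (e : Sym2 V) : Prop := ∀ v ∈ e, v ∈ vertexSpan T

instance (T : Finset (Sym2 V)) : DecidablePred (Spans T) := fun _ => by
  unfold Spans; infer_instance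

lemma two_le_inter_of_spans {T1 T2 : Finset (Sym2 V)} {e : Sym2 V} (he : ¬ e.IsDiag)
    (h1 : Spans T1 e) (h2 : Spans T2 e) :
    2 ≤ (vertexSpan T1 ∩ vertexSpan T2).card := by
  induction e using Sym2.ind with
  | _ a b =>
    rw [Sym2.isDiag_iff_proj_eq] at he
    have hsub : ({a, b} : Finset V) ⊆ vertexSpan T1 ∩ vertexSpan T2 := by
      intro v hv
      simp only [Finset.mem_insert, Finset.mem_singleton] at hv
      rcases hv with rfl | rfl <;>
        exact Finset.mem_inter.2 ⟨h1 _ (by simp), h2 _ (by simp)⟩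
    calc 2 = ({a, b} : Finset V).card := (Finset.card_pair he).symm
      _ ≤ _ := Finset.card_le_card hsub

lemma spans_of_mem {T : Finset (Sym2 V)} {e : Sym2 V} (h : e ∈ T) : Spans T e :=
  fun v hv => mem_vertexSpan.2 ⟨e, h, hv⟩

lemma exists_tight_of_not_sparse_insert {I : Finset (Sym2 V)} {e : Sym2 V}
    (hI : Sparse23 I) (he : ¬ e.IsDiag) (h : ¬ Sparse23 (insert e I)) :
    ∃ T, Tight I T ∧ Spans T e := by
  simp only [Sparse23, not_forall] at h
  obtain ⟨E', hsub, hne, hcard⟩ := h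
  push_neg at hcard
  have heE' : e ∈ E' := by
    by_contra heE'
    have : E' ⊆ I := fun x hx => by
      rcases Finset.mem_insert.1 (hsub hx) with rfl | hxI
      · exact absurd hx heE'
      · exact hxI
    exact absurd (hI E' this hne) (not_le.2 hcard)
  set T := E'.erase e with hT
  have hTI : T ⊆ I := by
    intro x hx
    have hx' := Finset.mem_of_mem_erase hx
    rcases Finset.mem_insert.1 (hsub hx') with rfl | hxI
    · exact absurd rfl (Finset.ne_of_mem_erase hx)
    · exact hxI
  have hE'T : E' = insert e T := by
    rw [hT, Finset.insert_erase heE']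
  have hcardT : E'.card = T.card + 1 := by
    rw [hE'T, Finset.card_insert_of_notMem (Finset.notMem_erase e E')]
  rcases T.eq_empty_or_nonempty with hTe | hTne
  · exfalso
    rw [hTe] at hE'T
    rw [hE'T] at hcard
    have : (vertexSpan (insert e (∅ : Finset (Sym2 V)))).card = 2 := by
      simpa using card_vertexSpan_singleton he
    rw [this] at hcard
    simp at hcard
  · have hsparseT := hI T hTI hTne
    have hmono : vertexSpan T ⊆ vertexSpan E' :=
      vertexSpan_mono (by rw [hE'T]; exact Finset.subset_insert e T)
    have hVle : (vertexSpan T).card ≤ (vertexSpan E').card := Finset.card_le_card hmono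
    have htight : (T.card : ℤ) = 2 * (vertexSpan T).card - 3 := by
      push_cast at hsparseT hcard ⊢
      omega
    have hVeq : (vertexSpan T).card = (vertexSpan E').card := by
      push_cast at hsparseT hcard
      omega
    have hspanEq : vertexSpan T = vertexSpan E' :=
      Finset.eq_of_subset_of_card_le hmono (le_of_eq hVeq.symm)
    refine ⟨T, ⟨hTI, htight⟩, fun v hv => ?_⟩
    rw [hspanEq]
    exact mem_vertexSpan.2 ⟨e, heE', hv⟩

/-- The union of all tight subsets of `I` spanning `e`. -/
def maxTight (I : Finset (Sym2 V)) (e : Sym2 V) : Finset (Sym2 V) :=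
  (I.powerset.filter fun T => Tight I T ∧ Spans T e).sup id

lemma maxTight_spec {I : Finset (Sym2 V)} {e : Sym2 V} (hI : Sparse23 I) (he : ¬ e.IsDiag)
    (hex : ∃ T, Tight I T ∧ Spans T e) :
    Tight I (maxTight I e) ∧ Spans (maxTight I e) e := by
  classical
  set F := I.powerset.filter fun T => Tight I T ∧ Spans T e with hF
  have hmem : ∀ T ∈ F, Tight I T ∧ Spans T e := fun T hT =>
    (Finset.mem_filter.1 hT).2
  have hFne : F.Nonempty := by
    obtain ⟨T, hT⟩ := hex
    exact ⟨T, Finset.mem_filter.2 ⟨Finset.mem_powerset.2 hT.1.1, hT⟩⟩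
  -- prove by induction on F that the sup of any nonempty subfamily is tight and spans e
  suffices h : ∀ G : Finset (Finset (Sym2 V)), (∀ T ∈ G, Tight I T ∧ Spans T e) →
      G.Nonempty → Tight I (G.sup id) ∧ Spans (G.sup id) e by
    exact h F hmem hFne
  intro G
  induction G using Finset.induction_on with
  | empty => intro _ h; exact absurd h (by simp)
  | insert a s hx ih =>
    intro hmem' _
    have ha := hmem' a (Finset.mem_insert_self a s)
    rcases s.eq_empty_or_nonempty with rfl | hsne
    · simpa using ha
    · have hs := ih (fun T hT => hmem' T (Finset.mem_insert_of_mem hT)) hsne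
      rw [Finset.sup_insert]
      have h2 : 2 ≤ (vertexSpan a ∩ vertexSpan (s.sup id)).card :=
        two_le_inter_of_spans he ha.2 hs.2
      constructor
      · exact tight_union hI ha.1 hs.1 h2
      · intro v hv
        have : v ∈ vertexSpan a := ha.2 v hv
        exact vertexSpan_mono (by exact Finset.subset_union_left) this

lemma subset_maxTight {I T : Finset (Sym2 V)} {e : Sym2 V}
    (hT : Tight I T) (hsp : Spans T e) : T ⊆ maxTight I e := by
  classical
  exact Finset.le_sup (f := id)
    (Finset.mem_filter.2 ⟨Finset.mem_powerset.2 hT.1, hT, hsp⟩)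

lemma maxTight_eq_of_two_le {I : Finset (Sym2 V)} {e f : Sym2 V} (hI : Sparse23 I)
    (he : ¬ e.IsDiag) (hf : ¬ f.IsDiag)
    (hexe : ∃ T, Tight I T ∧ Spans T e) (hexf : ∃ T, Tight I T ∧ Spans T f)
    (h2 : 2 ≤ (vertexSpan (maxTight I e) ∩ vertexSpan (maxTight I f)).card) :
    maxTight I e = maxTight I f := by
  obtain ⟨hte, hse⟩ := maxTight_spec hI he hexe
  obtain ⟨htf, hsf⟩ := maxTight_spec hI hf hexf
  have hu : Tight I (maxTight I e ∪ maxTight I f) := tight_union hI hte htf h2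
  have hue : Spans (maxTight I e ∪ maxTight I f) e := fun v hv =>
    vertexSpan_mono Finset.subset_union_left (hse v hv)
  have huf : Spans (maxTight I e ∪ maxTight I f) f := fun v hv =>
    vertexSpan_mono Finset.subset_union_right (hsf v hv)
  have h1 : maxTight I e ∪ maxTight I f ⊆ maxTight I e := subset_maxTight hu hue
  have h2' : maxTight I e ∪ maxTight I f ⊆ maxTight I f := subset_maxTight hu huf
  exact Finset.Subset.antisymm
    (le_trans Finset.subset_union_left h2')
    (le_trans Finset.subset_union_right h1)

/-- The key augmentation property for `(2,3)`-sparse sets. -/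
lemma sparse_aug (I J : Finset (Sym2 V)) (hI : Sparse23 I) (hJ : Sparse23 J)
    (hlt : I.card < J.card) :
    ∃ e ∈ J, e ∉ I ∧ Sparse23 (insert e I) := by
  classical
  by_contra hcon
  push_neg at hcon
  -- every edge of J has a tight subset of I spanning it
  have hex : ∀ e ∈ J, ∃ T, Tight I T ∧ Spans T e := by
    intro e heJ
    by_cases heI : e ∈ I
    · exact ⟨{e}, tight_singleton heI (sparse_nodiag hJ heJ), spans_of_mem (by simp)⟩
    · exact exists_tight_of_not_sparse_insert hI (sparse_nodiag hJ heJ)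
        (hcon e heJ heI)
  have hMspec : ∀ e ∈ J, Tight I (maxTight I e) ∧ Spans (maxTight I e) e :=
    fun e heJ => maxTight_spec hI (sparse_nodiag hJ heJ) (hex e heJ)
  set D := J.image (maxTight I) with hD
  -- distinct members of D have small span intersection
  have hsmall : ∀ T1 ∈ D, ∀ T2 ∈ D, T1 ≠ T2 →
      (vertexSpan T1 ∩ vertexSpan T2).card ≤ 1 := by
    intro T1 hT1 T2 hT2 hne
    obtain ⟨e, heJ, rfl⟩ := Finset.mem_image.1 hT1
    obtain ⟨f, hfJ, rfl⟩ := Finset.mem_image.1 hT2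
    by_contra hc
    push_neg at hc
    exact hne (maxTight_eq_of_two_le hI (sparse_nodiag hJ heJ) (sparse_nodiag hJ hfJ)
      (hex e heJ) (hex f hfJ) hc)
  -- distinct members of D are disjoint
  have hdisj : ∀ T1 ∈ D, ∀ T2 ∈ D, T1 ≠ T2 → Disjoint T1 T2 := by
    intro T1 hT1 T2 hT2 hne
    rw [Finset.disjoint_left]
    intro g hg1 hg2
    have hT1I : T1 ⊆ I := by
      obtain ⟨e, heJ, rfl⟩ := Finset.mem_image.1 hT1
      exact (hMspec e heJ).1.1
    have hgnd : ¬ g.IsDiag := sparse_nodiag hI (hT1I hg1)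
    have := two_le_inter_of_spans hgnd (spans_of_mem hg1) (spans_of_mem hg2)
    have := hsmall T1 hT1 T2 hT2 hne
    omega
  -- sum of cards of D members is at most |I|
  have hsumI : ∑ T ∈ D, T.card ≤ I.card := by
    rw [← Finset.card_biUnion hdisj]
    apply Finset.card_le_card
    intro g hg
    obtain ⟨T, hT, hgT⟩ := Finset.mem_biUnion.1 hg
    obtain ⟨e, heJ, rfl⟩ := Finset.mem_image.1 hT
    exact (hMspec e heJ).1.1 hgT
  -- J is covered by the filters
  have hcover : J ⊆ D.biUnion (fun T => J.filter fun g => Spans T g) := by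
    intro e heJ
    apply Finset.mem_biUnion.2
    refine ⟨maxTight I e, Finset.mem_image.2 ⟨e, heJ, rfl⟩, ?_⟩
    exact Finset.mem_filter.2 ⟨heJ, (hMspec e heJ).2⟩
  -- the filters are pairwise disjoint
  have hdisjF : ∀ T1 ∈ D, ∀ T2 ∈ D, T1 ≠ T2 →
      Disjoint (J.filter fun g => Spans T1 g) (J.filter fun g => Spans T2 g) := by
    intro T1 hT1 T2 hT2 hne
    rw [Finset.disjoint_left]
    intro g hg1 hg2
    obtain ⟨hgJ, hs1⟩ := Finset.mem_filter.1 hg1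
    obtain ⟨-, hs2⟩ := Finset.mem_filter.1 hg2
    have := two_le_inter_of_spans (sparse_nodiag hJ hgJ) hs1 hs2
    have := hsmall T1 hT1 T2 hT2 hne
    omega
  -- each filter has at most |T| elements
  have hfilter : ∀ T ∈ D, (J.filter fun g => Spans T g).card ≤ T.card := by
    intro T hT
    obtain ⟨e, heJ, rfl⟩ := Finset.mem_image.1 hT
    have htight := (hMspec e heJ).1
    rcases (J.filter fun g => Spans (maxTight I e) g).eq_empty_or_nonempty with hFe | hFne
    · rw [hFe]; simp
    · have hsp : vertexSpan (J.filter fun g => Spans (maxTight I e) g) ⊆ vertexSpan (maxTight I e) := by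
        intro v hv
        obtain ⟨g, hg, hvg⟩ := mem_vertexSpan.1 hv
        exact (Finset.mem_filter.1 hg).2 v hvg
      have h1 := hJ _ (Finset.filter_subset _ J) hFne
      have h2 : (vertexSpan (J.filter fun g => Spans (maxTight I e) g)).card ≤ (vertexSpan (maxTight I e)).card :=
        Finset.card_le_card hsp
      have h3 := htight.2
      push_cast at h1 h3 ⊢
      omega
  -- combine
  have hJcard : J.card ≤ ∑ T ∈ D, T.card := by
    calc J.card ≤ (D.biUnion fun T => J.filter fun g => Spans T g).card :=
          Finset.card_le_card hcover
      _ = ∑ T ∈ D, (J.filter fun g => Spans T g).card := Finset.card_biUnion hdisjF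
      _ ≤ ∑ T ∈ D, T.card := Finset.sum_le_sum hfilter
  omega

end SparseAux

/-- For every `n ≥ 2` there is a matroid on the edges of the complete graph `K_n`
(the non-diagonal unordered pairs of `Fin n`) whose independent sets are exactly the
`(2,3)`-sparse edge sets. -/
theorem exists_sparsity_matroid (n : ℕ) (hn : 2 ≤ n) :
    ∃ M : Matroid (Sym2 (Fin n)),
      M.E = {e : Sym2 (Fin n) | ¬ e.IsDiag} ∧
      ∀ S : Set (Sym2 (Fin n)),
        M.Indep S ↔ ((∀ e ∈ S, ¬ e.IsDiag) ∧ Sparse23 (Set.toFinite S).toFinset) := by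
  classical
  set Ind : Set (Sym2 (Fin n)) → Prop :=
    fun S => (∀ e ∈ S, ¬ e.IsDiag) ∧ Sparse23 (Set.toFinite S).toFinset with hInd
  have hmemTF : ∀ (S : Set (Sym2 (Fin n))) (e : Sym2 (Fin n)),
      e ∈ (Set.toFinite S).toFinset ↔ e ∈ S := fun S e => Set.Finite.mem_toFinset _
  have indep_empty : Ind ∅ := by
    constructor
    · intro e he; exact absurd he (Set.notMem_empty e)
    · intro E' hE' hne
      exfalso
      obtain ⟨e, he⟩ := hne
      have := (hmemTF ∅ e).1 (hE' he)
      exact this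
  have indep_subset : ∀ ⦃I J : Set (Sym2 (Fin n))⦄, Ind J → I ⊆ J → Ind I := by
    intro I J hJ hIJ
    refine ⟨fun e he => hJ.1 e (hIJ he), ?_⟩
    intro E' hE' hne
    refine hJ.2 E' ?_ hne
    intro x hx
    exact (hmemTF J x).2 (hIJ ((hmemTF I x).1 (hE' hx)))
  have indep_aug : ∀ ⦃I J : Set (Sym2 (Fin n))⦄, Ind I → Ind J →
      I.ncard < J.ncard → ∃ e ∈ J, e ∉ I ∧ Ind (insert e I) := by
    intro I J hI hJ hlt
    have hIc : I.ncard = (Set.toFinite I).toFinset.card := Set.ncard_eq_toFinset_card I _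
    have hJc : J.ncard = (Set.toFinite J).toFinset.card := Set.ncard_eq_toFinset_card J _
    rw [hIc, hJc] at hlt
    obtain ⟨e, heJ, heI, hsp⟩ := SparseAux.sparse_aug _ _ hI.2 hJ.2 hlt
    rw [hmemTF] at heJ heI
    refine ⟨e, heJ, heI, ?_, ?_⟩
    · intro f hf
      rcases Set.mem_insert_iff.1 hf with rfl | hfI
      · exact hJ.1 f heJ
      · exact hI.1 f hfI
    · have heq : (Set.toFinite (insert e I)).toFinset = insert e (Set.toFinite I).toFinset := by
        ext x
        rw [hmemTF, Finset.mem_insert, hmemTF, Set.mem_insert_iff]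
      rw [heq]
      exact hsp
  have subset_ground : ∀ ⦃I : Set (Sym2 (Fin n))⦄, Ind I →
      I ⊆ {e : Sym2 (Fin n) | ¬ e.IsDiag} := by
    intro I hI e he
    exact hI.1 e he
  refine ⟨(IndepMatroid.ofFinite (Set.toFinite _) Ind indep_empty indep_subset
    indep_aug subset_ground).matroid, rfl, fun S => ?_⟩
  rw [IndepMatroid.matroid_indep_iff, IndepMatroid.ofFinite_indep]
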